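/- Let {(X_i, Y_i)}_{i=1}^n be random vectors in ℝ^{d₁} × ℝ^{d₂}, each with the same marginal distribution Π, let α ∈ (1,2], let ψ_α be a Catoni-type truncation function of order α, let Θ ⊆ ℝ^{d₂×d₁} be a set of matrices with E_{Π}|X|^α < ∞ and sup_{θ∈Θ} R_{ℓα}(θ) < ∞, and let θ ∈ Θ, λ > 0, δ > 0. Then for any nonempty subset I ⊆ {1,…,n}, E[exp{ −(1/|I|) Σ_{i∈I} ψ_α( λ|Y_i − θ·X_i| − λδ|X_i| ) }] ≤ exp{ λ [ −R_{ℓ1}(θ) + δ E|X₁| + ((2λ)^{α−1}/α)( sup_{θ'∈Θ} R_{ℓα}(θ') + δ^α E|X₁|^α ) ] }. -/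

import Mathlib

open MeasureTheory ProbabilityTheory

/-- The matrix–vector product `θ · x`, viewed as a map between Euclidean spaces. -/
noncomputable def mulVecE {d₁ d₂ : ℕ} (θ : Matrix (Fin d₂) (Fin d₁) ℝ)
    (x : EuclideanSpace ℝ (Fin d₁)) : EuclideanSpace ℝ (Fin d₂) :=
  (EuclideanSpace.equiv (Fin d₂) ℝ).symm (θ.mulVec (EuclideanSpace.equiv (Fin d₁) ℝ x))

/-- `ψ` is a Catoni-type truncation function of order `α`. -/
def IsCatoni (α : ℝ) (ψ : ℝ → ℝ) : Prop :=
  ∀ r : ℝ, -Real.log (1 - r + |r| ^ α / α) ≤ ψ r ∧ ψ r ≤ Real.log (1 + r + |r| ^ α / α)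

/-- Auxiliary: `(a+b)^p ≤ 2^(p-1) (a^p + b^p)` for nonnegative reals, `p ≥ 1`. -/
lemma aux_add_rpow {a b p : ℝ} (ha : 0 ≤ a) (hb : 0 ≤ b) (hp : 1 ≤ p) :
    (a + b) ^ p ≤ 2 ^ (p - 1) * (a ^ p + b ^ p) := by
  have h := NNReal.rpow_add_le_mul_rpow_add_rpow a.toNNReal b.toNNReal hp
  have h2 := NNReal.coe_le_coe.2 h
  push_cast at h2
  rwa [Real.coe_toNNReal _ ha, Real.coe_toNNReal _ hb] at h2

/-- Auxiliary: positivity of Catoni's lower truncation. -/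
lemma aux_pos {α : ℝ} (hα : 1 < α) (r : ℝ) : 0 < 1 - r + |r| ^ α / α := by
  have hα0 : (0:ℝ) < α := lt_trans one_pos hα
  have habs : 0 ≤ |r| ^ α / α := div_nonneg (Real.rpow_nonneg (abs_nonneg r) α) hα0.le
  rcases le_or_gt r 0 with h | h
  · linarith
  · have hconj := Real.HolderConjugate.conjExponent hα
    have hy := Real.young_inequality r 1 hconj
    rw [mul_one, abs_one, Real.one_rpow] at hy
    have h1 : α⁻¹ + (Real.conjExponent α)⁻¹ = 1 := hconj.inv_add_inv_eq_one
    have hd1 : (1:ℝ) / Real.conjExponent α = (Real.conjExponent α)⁻¹ := one_div _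
    have hinv : 0 < α⁻¹ := inv_pos.2 hα0
    linarith

/-- Auxiliary: the shifted loss function on the product space. -/
noncomputable def eFun {d₁ d₂ : ℕ} (θ : Matrix (Fin d₂) (Fin d₁) ℝ) (lam δ : ℝ)
    (q : EuclideanSpace ℝ (Fin d₁) × EuclideanSpace ℝ (Fin d₂)) : ℝ :=
  lam * ‖q.2 - mulVecE θ q.1‖ - lam * δ * ‖q.1‖

/-- Auxiliary: Catoni's upper comparison function applied to the shifted loss. -/
noncomputable def phiFun {d₁ d₂ : ℕ} (α : ℝ) (θ : Matrix (Fin d₂) (Fin d₁) ℝ) (lam δ : ℝ)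
    (q : EuclideanSpace ℝ (Fin d₁) × EuclideanSpace ℝ (Fin d₂)) : ℝ :=
  1 - eFun θ lam δ q + |eFun θ lam δ q| ^ α / α

lemma mulVecE_continuous {d₁ d₂ : ℕ} (θ : Matrix (Fin d₂) (Fin d₁) ℝ) :
    Continuous (mulVecE θ) := by
  have h1 : Continuous (θ.mulVecLin : (Fin d₁ → ℝ) → (Fin d₂ → ℝ)) :=
    θ.mulVecLin.continuous_of_finiteDimensional
  have h2 : Continuous fun x : EuclideanSpace ℝ (Fin d₁) =>
      (EuclideanSpace.equiv (Fin d₂) ℝ).symm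
        (θ.mulVecLin (EuclideanSpace.equiv (Fin d₁) ℝ x)) :=
    (EuclideanSpace.equiv (Fin d₂) ℝ).symm.continuous.comp
      (h1.comp (EuclideanSpace.equiv (Fin d₁) ℝ).continuous)
  exact h2

/-- Catoni-type exponential moment lower-tail bound for the shifted
truncated losses. -/
theorem stmt1 {d₁ d₂ n : ℕ} {Ω : Type*} [MeasurableSpace Ω]
    (P : Measure Ω) [IsProbabilityMeasure P]
    (μxy : Measure (EuclideanSpace ℝ (Fin d₁) × EuclideanSpace ℝ (Fin d₂)))
    [IsProbabilityMeasure μxy]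
    (X : Fin n → Ω → EuclideanSpace ℝ (Fin d₁))
    (Y : Fin n → Ω → EuclideanSpace ℝ (Fin d₂))
    (hmeas : ∀ i, Measurable fun ω => (X i ω, Y i ω))
    (hlaw : ∀ i, Measure.map (fun ω => (X i ω, Y i ω)) P = μxy)
    (α : ℝ) (hα₁ : 1 < α) (hα₂ : α ≤ 2)
    (ψ : ℝ → ℝ) (hψ : IsCatoni α ψ)
    (Θ : Set (Matrix (Fin d₂) (Fin d₁) ℝ))
    -- finite α-th moment of X
    (hX1 : Integrable (fun q => ‖q.1‖) μxy)
    (hXα : Integrable (fun q => ‖q.1‖ ^ α) μxy)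
    -- the ℓα-risk is uniformly bounded over Θ, with supremum S
    (hRαInt : ∀ θ ∈ Θ, Integrable (fun q => ‖q.2 - mulVecE θ q.1‖ ^ α) μxy)
    (S : ℝ)
    (hS : IsLUB {r : ℝ | ∃ θ ∈ Θ, r = ∫ q, ‖q.2 - mulVecE θ q.1‖ ^ α ∂μxy} S)
    (θ : Matrix (Fin d₂) (Fin d₁) ℝ) (hθ : θ ∈ Θ)
    (hR1Int : Integrable (fun q => ‖q.2 - mulVecE θ q.1‖) μxy)
    (lam δ : ℝ) (hlam : 0 < lam) (hδ : 0 < δ)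
    (I : Finset (Fin n)) (hI : I.Nonempty) :
    ∫ ω, Real.exp (-((I.card : ℝ)⁻¹
          * ∑ i ∈ I, ψ (lam * ‖Y i ω - mulVecE θ (X i ω)‖ - lam * δ * ‖X i ω‖))) ∂P
      ≤ Real.exp (lam * (-(∫ q, ‖q.2 - mulVecE θ q.1‖ ∂μxy)
          + δ * (∫ q, ‖q.1‖ ∂μxy)
          + (2 * lam) ^ (α - 1) / α * (S + δ ^ α * ∫ q, ‖q.1‖ ^ α ∂μxy))) := by
  classical
  have hα0 : (0:ℝ) < α := lt_trans one_pos hα₁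
  set C : ℝ := -(∫ q, ‖q.2 - mulVecE θ q.1‖ ∂μxy) + δ * (∫ q, ‖q.1‖ ∂μxy)
      + (2 * lam) ^ (α - 1) / α * (S + δ ^ α * ∫ q, ‖q.1‖ ^ α ∂μxy) with hC
  -- continuity / measurability of eFun and phiFun
  have hecont : Continuous (eFun θ lam δ) := by
    unfold eFun
    exact (continuous_const.mul
        ((continuous_snd.sub ((mulVecE_continuous θ).comp continuous_fst)).norm)).sub
      (continuous_const.mul continuous_fst.norm)
  have heabs : Continuous fun q => |eFun θ lam δ q| ^ α :=
    hecont.abs.rpow_const fun _ => Or.inr hα0.le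
  have hφcont : Continuous (phiFun α θ lam δ) := by
    unfold phiFun
    exact (continuous_const.sub hecont).add (heabs.div_const α)
  -- integrability on μxy
  have heInt : Integrable (eFun θ lam δ) μxy := by
    unfold eFun
    exact (hR1Int.const_mul lam).sub (hX1.const_mul (lam * δ))
  have hbInt : Integrable (fun q => (2:ℝ) ^ (α - 1) *
      (lam ^ α * ‖q.2 - mulVecE θ q.1‖ ^ α + (lam * δ) ^ α * ‖q.1‖ ^ α)) μxy :=
    (((hRαInt θ hθ).const_mul _).add (hXα.const_mul _)).const_mul _
  have hptb : ∀ q, |eFun θ lam δ q| ^ α ≤ (2:ℝ) ^ (α - 1) *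
      (lam ^ α * ‖q.2 - mulVecE θ q.1‖ ^ α + (lam * δ) ^ α * ‖q.1‖ ^ α) := by
    intro q
    have h1 : |eFun θ lam δ q| ≤ lam * ‖q.2 - mulVecE θ q.1‖ + lam * δ * ‖q.1‖ := by
      unfold eFun
      have h2 : |lam * ‖q.2 - mulVecE θ q.1‖| = lam * ‖q.2 - mulVecE θ q.1‖ :=
        abs_of_nonneg (mul_nonneg hlam.le (norm_nonneg _))
      have h3 : |lam * δ * ‖q.1‖| = lam * δ * ‖q.1‖ :=
        abs_of_nonneg (mul_nonneg (mul_nonneg hlam.le hδ.le) (norm_nonneg _))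
      calc |lam * ‖q.2 - mulVecE θ q.1‖ - lam * δ * ‖q.1‖|
          ≤ |lam * ‖q.2 - mulVecE θ q.1‖| + |lam * δ * ‖q.1‖| := abs_sub _ _
        _ = lam * ‖q.2 - mulVecE θ q.1‖ + lam * δ * ‖q.1‖ := by rw [h2, h3]
    calc |eFun θ lam δ q| ^ α
        ≤ (lam * ‖q.2 - mulVecE θ q.1‖ + lam * δ * ‖q.1‖) ^ α :=
          Real.rpow_le_rpow (abs_nonneg _) h1 hα0.le
      _ ≤ (2:ℝ) ^ (α - 1) * ((lam * ‖q.2 - mulVecE θ q.1‖) ^ α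
            + (lam * δ * ‖q.1‖) ^ α) :=
          aux_add_rpow (mul_nonneg hlam.le (norm_nonneg _))
            (mul_nonneg (mul_nonneg hlam.le hδ.le) (norm_nonneg _)) hα₁.le
      _ = (2:ℝ) ^ (α - 1) * (lam ^ α * ‖q.2 - mulVecE θ q.1‖ ^ α
            + (lam * δ) ^ α * ‖q.1‖ ^ α) := by
          rw [Real.mul_rpow hlam.le (norm_nonneg _),
            Real.mul_rpow (mul_nonneg hlam.le hδ.le) (norm_nonneg _)]
  have heαInt : Integrable (fun q => |eFun θ lam δ q| ^ α) μxy := by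
    refine hbInt.mono' heabs.aestronglyMeasurable (ae_of_all _ fun q => ?_)
    rw [Real.norm_eq_abs, abs_of_nonneg (Real.rpow_nonneg (abs_nonneg _) α)]
    exact hptb q
  have hφInt : Integrable (phiFun α θ lam δ) μxy := by
    unfold phiFun
    exact ((integrable_const 1).sub heInt).add (heαInt.div_const α)
  -- integral computations on μxy
  have hinte : ∫ q, eFun θ lam δ q ∂μxy
      = lam * (∫ q, ‖q.2 - mulVecE θ q.1‖ ∂μxy) - lam * δ * (∫ q, ‖q.1‖ ∂μxy) := by
    unfold eFun
    rw [integral_sub (hR1Int.const_mul lam) (hX1.const_mul (lam * δ)),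
      integral_const_mul, integral_const_mul]
  have hinteα : ∫ q, |eFun θ lam δ q| ^ α ∂μxy ≤ (2:ℝ) ^ (α - 1) *
      (lam ^ α * (∫ q, ‖q.2 - mulVecE θ q.1‖ ^ α ∂μxy)
        + (lam * δ) ^ α * (∫ q, ‖q.1‖ ^ α ∂μxy)) := by
    calc ∫ q, |eFun θ lam δ q| ^ α ∂μxy
        ≤ ∫ q, (2:ℝ) ^ (α - 1) * (lam ^ α * ‖q.2 - mulVecE θ q.1‖ ^ α
            + (lam * δ) ^ α * ‖q.1‖ ^ α) ∂μxy :=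
          integral_mono heαInt hbInt hptb
      _ = _ := by
          rw [integral_const_mul,
            integral_add ((hRαInt θ hθ).const_mul _) (hXα.const_mul _),
            integral_const_mul, integral_const_mul]
  have hRαS : (∫ q, ‖q.2 - mulVecE θ q.1‖ ^ α ∂μxy) ≤ S := hS.1 ⟨θ, hθ, rfl⟩
  have hEXα : 0 ≤ ∫ q, ‖q.1‖ ^ α ∂μxy :=
    integral_nonneg fun q => Real.rpow_nonneg (norm_nonneg _) α
  -- key bound : ∫ phiFun ≤ 1 + lam * C
  have hφbound : ∫ q, phiFun α θ lam δ q ∂μxy ≤ 1 + lam * C := by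
    have hint : ∫ q, phiFun α θ lam δ q ∂μxy
        = 1 - (∫ q, eFun θ lam δ q ∂μxy) + (∫ q, |eFun θ lam δ q| ^ α ∂μxy) / α := by
      unfold phiFun
      have hsub1 : Integrable (fun q => 1 - eFun θ lam δ q) μxy :=
        (integrable_const 1).sub heInt
      have hdiv1 : Integrable (fun q => |eFun θ lam δ q| ^ α / α) μxy :=
        heαInt.div_const α
      rw [integral_add hsub1 hdiv1,
        integral_sub (integrable_const 1) heInt, integral_div, integral_const]
      simp
    have hpow : lam ^ (α - 1) * lam = lam ^ α := by
      rw [Real.rpow_sub hlam, Real.rpow_one, div_mul_cancel₀ _ hlam.ne']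
    have hlamC : lam * ((2 * lam) ^ (α - 1) / α) = (2:ℝ) ^ (α - 1) * lam ^ α / α := by
      calc lam * ((2 * lam) ^ (α - 1) / α)
          = (2:ℝ) ^ (α - 1) * (lam ^ (α - 1) * lam) / α := by
            rw [Real.mul_rpow (by norm_num) hlam.le]; ring
        _ = (2:ℝ) ^ (α - 1) * lam ^ α / α := by rw [hpow]
    have hmono : (2:ℝ) ^ (α - 1) * (lam ^ α * (∫ q, ‖q.2 - mulVecE θ q.1‖ ^ α ∂μxy)
          + (lam * δ) ^ α * (∫ q, ‖q.1‖ ^ α ∂μxy))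
        ≤ (2:ℝ) ^ (α - 1) * lam ^ α * (S + δ ^ α * ∫ q, ‖q.1‖ ^ α ∂μxy) := by
      have h2 : (0:ℝ) < (2:ℝ) ^ (α - 1) := Real.rpow_pos_of_pos (by norm_num) _
      have hl : (0:ℝ) < lam ^ α := Real.rpow_pos_of_pos hlam _
      have hld : (lam * δ) ^ α = lam ^ α * δ ^ α := Real.mul_rpow hlam.le hδ.le
      rw [hld]
      nlinarith [mul_le_mul_of_nonneg_left hRαS hl.le]
    have hkey : (∫ q, |eFun θ lam δ q| ^ α ∂μxy) / α
        ≤ lam * ((2 * lam) ^ (α - 1) / α * (S + δ ^ α * ∫ q, ‖q.1‖ ^ α ∂μxy)) := by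
      have h1 : (∫ q, |eFun θ lam δ q| ^ α ∂μxy) / α
          ≤ ((2:ℝ) ^ (α - 1) * lam ^ α * (S + δ ^ α * ∫ q, ‖q.1‖ ^ α ∂μxy)) / α := by
        gcongr
        exact hinteα.trans hmono
      have h2 : lam * ((2 * lam) ^ (α - 1) / α * (S + δ ^ α * ∫ q, ‖q.1‖ ^ α ∂μxy))
          = ((2:ℝ) ^ (α - 1) * lam ^ α * (S + δ ^ α * ∫ q, ‖q.1‖ ^ α ∂μxy)) / α := by
        rw [← mul_assoc, hlamC, div_mul_eq_mul_div]
      rw [h2]; exact h1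
    rw [hint, hinte, hC]
    ring_nf
    ring_nf at hkey
    linarith
  -- pointwise comparison of exp(-ψ r) with phi
  have hexpφ : ∀ r : ℝ, Real.exp (-(ψ r)) ≤ 1 - r + |r| ^ α / α := by
    intro r
    have hpos := aux_pos hα₁ r
    have hlow := (hψ r).1
    calc Real.exp (-(ψ r)) ≤ Real.exp (Real.log (1 - r + |r| ^ α / α)) :=
        Real.exp_le_exp.2 (by linarith)
      _ = _ := Real.exp_log hpos
  have hm : (0:ℝ) < (I.card : ℝ) := by exact_mod_cast Finset.card_pos.2 hI
  have hpt : ∀ ω, Real.exp (-((I.card : ℝ)⁻¹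
        * ∑ i ∈ I, ψ (lam * ‖Y i ω - mulVecE θ (X i ω)‖ - lam * δ * ‖X i ω‖)))
      ≤ (I.card : ℝ)⁻¹ * ∑ i ∈ I, phiFun α θ lam δ (X i ω, Y i ω) := by
    intro ω
    have hw1 : ∑ _i ∈ I, ((I.card:ℝ)⁻¹) = 1 := by
      rw [Finset.sum_const, nsmul_eq_mul, mul_inv_cancel₀ hm.ne']
    have hJ := convexOn_exp.map_sum_le (t := I) (w := fun _ => (I.card:ℝ)⁻¹)
      (p := fun i => -(ψ (lam * ‖Y i ω - mulVecE θ (X i ω)‖ - lam * δ * ‖X i ω‖)))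
      (fun i _ => inv_nonneg.2 hm.le) hw1 (fun i _ => Set.mem_univ _)
    have heq : (∑ i ∈ I, ((I.card:ℝ)⁻¹ : ℝ)
          • (-(ψ (lam * ‖Y i ω - mulVecE θ (X i ω)‖ - lam * δ * ‖X i ω‖))))
        = -((I.card : ℝ)⁻¹
          * ∑ i ∈ I, ψ (lam * ‖Y i ω - mulVecE θ (X i ω)‖ - lam * δ * ‖X i ω‖)) := by
      rw [Finset.mul_sum, ← Finset.sum_neg_distrib]
      refine Finset.sum_congr rfl fun i _ => ?_
      rw [smul_eq_mul, mul_neg]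
    rw [← heq]
    refine hJ.trans ?_
    rw [Finset.mul_sum]
    refine Finset.sum_le_sum fun i _ => ?_
    rw [smul_eq_mul]
    refine mul_le_mul_of_nonneg_left ?_ (inv_nonneg.2 hm.le)
    have h := hexpφ (lam * ‖Y i ω - mulVecE θ (X i ω)‖ - lam * δ * ‖X i ω‖)
    simpa [phiFun, eFun] using h
  -- integrability and laws on P
  have hgInt : ∀ i : Fin n, Integrable (fun ω => phiFun α θ lam δ (X i ω, Y i ω)) P := by
    intro i
    have h1 : Integrable (phiFun α θ lam δ) (Measure.map (fun ω => (X i ω, Y i ω)) P) := by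
      rw [hlaw i]; exact hφInt
    have h2 := (integrable_map_measure
      (by rw [hlaw i]; exact hφcont.aestronglyMeasurable) (hmeas i).aemeasurable).1 h1
    exact h2
  have hgEq : ∀ i : Fin n, ∫ ω, phiFun α θ lam δ (X i ω, Y i ω) ∂P
      = ∫ q, phiFun α θ lam δ q ∂μxy := by
    intro i
    have h := integral_map (μ := P) (hmeas i).aemeasurable
      (f := phiFun α θ lam δ) (by rw [hlaw i]; exact hφcont.aestronglyMeasurable)
    rw [hlaw i] at h
    exact h.symm
  calc ∫ ω, Real.exp (-((I.card : ℝ)⁻¹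
          * ∑ i ∈ I, ψ (lam * ‖Y i ω - mulVecE θ (X i ω)‖ - lam * δ * ‖X i ω‖))) ∂P
      ≤ ∫ ω, (I.card:ℝ)⁻¹ * ∑ i ∈ I, phiFun α θ lam δ (X i ω, Y i ω) ∂P :=
        integral_mono_of_nonneg (ae_of_all _ fun ω => (Real.exp_pos _).le)
          ((integrable_finset_sum I fun i _ => hgInt i).const_mul _) (ae_of_all _ hpt)
    _ = (I.card:ℝ)⁻¹ * ∑ i ∈ I, ∫ ω, phiFun α θ lam δ (X i ω, Y i ω) ∂P := by
        rw [integral_const_mul, integral_finset_sum I fun i _ => hgInt i]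
    _ = ∫ q, phiFun α θ lam δ q ∂μxy := by
        rw [Finset.sum_congr rfl fun i _ => hgEq i, Finset.sum_const, nsmul_eq_mul,
          ← mul_assoc, inv_mul_cancel₀ hm.ne', one_mul]
    _ ≤ 1 + lam * C := hφbound
    _ ≤ Real.exp (lam * C) := by linarith [Real.add_one_le_exp (lam * C)]
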